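/- Let H be a nonzero complex Hilbert space and let A be a bounded linear operator on H. Then (1/4)·‖A*A + AA*‖ + (1/2)·max{‖Re(A)‖, ‖Im(A)‖}·| ‖Re(A) + Im(A)‖ − ‖Re(A) − Im(A)‖ | ≤ w(A)² ≤ w(|Re(A)| + i|Im(A)|)². -/

import Mathlib

open scoped InnerProductSpace
open ContinuousLinearMap

variable {H : Type*} [NormedAddCommGroup H] [InnerProductSpace ℂ H]
  [CompleteSpace H] [Nontrivial H]

/-- The numerical radius of a bounded linear operator. -/
noncomputable def numRad (A : H →L[ℂ] H) : ℝ :=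
  ⨆ x : {x : H // ‖x‖ = 1}, ‖⟪A x.1, x.1⟫_ℂ‖

/-- The Crawford number of a bounded linear operator. -/
noncomputable def crawford (A : H →L[ℂ] H) : ℝ :=
  ⨅ x : {x : H // ‖x‖ = 1}, ‖⟪A x.1, x.1⟫_ℂ‖

/-- The Euclidean operator radius of a pair of bounded linear operators. -/
noncomputable def euclRad (B C : H →L[ℂ] H) : ℝ :=
  ⨆ x : {x : H // ‖x‖ = 1}, Real.sqrt (‖⟪B x.1, x.1⟫_ℂ‖ ^ 2 + ‖⟪C x.1, x.1⟫_ℂ‖ ^ 2)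

/-- The absolute value `|A| = (A*A)^(1/2)` of a bounded linear operator. -/
noncomputable def opAbs (A : H →L[ℂ] H) : H →L[ℂ] H := CFC.sqrt (adjoint A * A)

/-- The real part `Re(A) = (A + A*)/2` of a bounded linear operator. -/
noncomputable def reOp (A : H →L[ℂ] H) : H →L[ℂ] H := (2 : ℂ)⁻¹ • (A + adjoint A)

/-- The imaginary part `Im(A) = (A - A*)/(2i)` of a bounded linear operator. -/
noncomputable def imOp (A : H →L[ℂ] H) : H →L[ℂ] H := (2 * Complex.I)⁻¹ • (A - adjoint A)

namespace MyAux

instance : Nonempty {x : H // ‖x‖ = 1} := by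
  obtain ⟨x, hx⟩ := exists_norm_eq H (zero_le_one)
  exact ⟨⟨x, hx⟩⟩

lemma bdd (A : H →L[ℂ] H) :
    BddAbove (Set.range fun x : {x : H // ‖x‖ = 1} => ‖⟪A x.1, x.1⟫_ℂ‖) := by
  refine ⟨‖A‖, ?_⟩
  rintro _ ⟨x, rfl⟩
  calc ‖⟪A x.1, x.1⟫_ℂ‖ ≤ ‖A x.1‖ * ‖x.1‖ := norm_inner_le_norm _ _
    _ ≤ ‖A‖ * ‖x.1‖ * ‖x.1‖ := by
        have := A.le_opNorm x.1
        nlinarith [norm_nonneg (A x.1), norm_nonneg x.1]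
    _ = ‖A‖ := by rw [x.2]; ring

lemma le_numRad (A : H →L[ℂ] H) {x : H} (hx : ‖x‖ = 1) :
    ‖⟪A x, x⟫_ℂ‖ ≤ numRad A :=
  le_ciSup (bdd A) (⟨x, hx⟩ : {x : H // ‖x‖ = 1})

lemma numRad_nonneg (A : H →L[ℂ] H) : 0 ≤ numRad A := by
  obtain ⟨x⟩ := (inferInstance : Nonempty {x : H // ‖x‖ = 1})
  exact le_trans (norm_nonneg _) (le_numRad A x.2)

lemma numRad_le (A : H →L[ℂ] H) {c : ℝ}
    (h : ∀ x : H, ‖x‖ = 1 → ‖⟪A x, x⟫_ℂ‖ ≤ c) : numRad A ≤ c :=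
  ciSup_le fun x => h x.1 x.2

lemma numRad_mono {A B : H →L[ℂ] H}
    (h : ∀ x : H, ‖x‖ = 1 → ‖⟪A x, x⟫_ℂ‖ ≤ ‖⟪B x, x⟫_ℂ‖) : numRad A ≤ numRad B :=
  numRad_le A fun x hx => (h x hx).trans (le_numRad B hx)

/-- scaling: `|⟪S z, z⟫| ≤ numRad S * ‖z‖²` for all z. -/
lemma inner_le_numRad_sq (S : H →L[ℂ] H) (z : H) :
    ‖⟪S z, z⟫_ℂ‖ ≤ numRad S * ‖z‖ ^ 2 := by
  rcases eq_or_ne z 0 with rfl | hz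
  · simp
  · have hnz : ‖z‖ ≠ 0 := norm_ne_zero_iff.mpr hz
    set u : H := (‖z‖ : ℂ)⁻¹ • z with hu
    have hun : ‖u‖ = 1 := by
      rw [hu, norm_smul]
      simp [norm_inv, hnz]
    have key : ⟪S z, z⟫_ℂ = (‖z‖ : ℂ) ^ 2 * ⟪S u, u⟫_ℂ := by
      rw [hu, map_smul, inner_smul_left, inner_smul_right]
      have : ((‖z‖ : ℂ)) ≠ 0 := by exact_mod_cast hnz
      rw [map_inv₀, Complex.conj_ofReal]
      field_simp
    rw [key]
    rw [norm_mul]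
    have h1 : ‖((‖z‖ : ℂ)) ^ 2‖ = ‖z‖ ^ 2 := by
      rw [norm_pow, Complex.norm_real, Real.norm_of_nonneg (norm_nonneg z)]
    rw [h1]
    have := le_numRad S hun
    nlinarith [norm_nonneg z]

/-- For a selfadjoint operator, `⟪S x, x⟫` is real. -/
lemma inner_real {S : H →L[ℂ] H} (hS : IsSelfAdjoint S) (x : H) :
    ⟪S x, x⟫_ℂ = ((⟪S x, x⟫_ℂ).re : ℂ) := by
  have h := hS.isSymmetric.conj_inner_sym x x
  exact (Complex.conj_eq_iff_re.mp h).symm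

/-- Norm of a selfadjoint operator is at most its numerical radius. -/
lemma selfadjoint_norm_le {S : H →L[ℂ] H} (hS : IsSelfAdjoint S) :
    ‖S‖ ≤ numRad S := by
  set M := numRad S with hM
  have hM0 : 0 ≤ M := numRad_nonneg S
  refine S.opNorm_le_bound hM0 (fun x => ?_)
  rcases eq_or_ne (S x) 0 with h0 | h0
  · simp [h0, mul_nonneg hM0 (norm_nonneg x)]
  -- polarization bound: 4 * re ⟪S x, y⟫ ≤ 2 M (‖x‖² + ‖y‖²)
  have polar : ∀ y : H, 4 * (⟪S x, y⟫_ℂ).re ≤ 2 * M * (‖x‖ ^ 2 + ‖y‖ ^ 2) := by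
    intro y
    have hsymm := hS.isSymmetric
    have e1 : ⟪S (x + y), x + y⟫_ℂ - ⟪S (x - y), x - y⟫_ℂ
        = 2 * (⟪S x, y⟫_ℂ + ⟪S y, x⟫_ℂ) := by
      simp only [map_add, map_sub, inner_add_left, inner_add_right,
        inner_sub_left, inner_sub_right]
      ring
    have e2 : ⟪S y, x⟫_ℂ = (starRingEnd ℂ) ⟪S x, y⟫_ℂ := (hsymm.conj_inner_sym x y).symm
    have e3 : (⟪S (x + y), x + y⟫_ℂ - ⟪S (x - y), x - y⟫_ℂ).re
        = 4 * (⟪S x, y⟫_ℂ).re := by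
      rw [e1, e2]
      have : ∀ w : ℂ, (2 * (w + (starRingEnd ℂ) w)).re = 4 * w.re := by
        intro w
        simp only [Complex.mul_re, Complex.add_re, Complex.conj_re, Complex.conj_im,
          Complex.re_ofNat, Complex.im_ofNat]
        ring
      exact this _
    have b1 : (⟪S (x + y), x + y⟫_ℂ).re ≤ M * ‖x + y‖ ^ 2 := by
      have := inner_le_numRad_sq S (x + y)
      exact le_trans (Complex.re_le_norm _) this
    have b2 : -(M * ‖x - y‖ ^ 2) ≤ (⟪S (x - y), x - y⟫_ℂ).re := by
      have h := inner_le_numRad_sq S (x - y)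
      have := abs_le.mp (le_trans (Complex.abs_re_le_norm _) h)
      linarith [this.1]
    have par : ‖x + y‖ ^ 2 + ‖x - y‖ ^ 2 = 2 * (‖x‖ ^ 2 + ‖y‖ ^ 2) := by
      have := parallelogram_law_with_norm ℂ x y
      nlinarith [this]
    have : (⟪S (x + y), x + y⟫_ℂ).re - (⟪S (x - y), x - y⟫_ℂ).re
        ≤ M * (‖x + y‖ ^ 2 + ‖x - y‖ ^ 2) := by nlinarith
    rw [← Complex.sub_re] at this
    rw [e3] at this
    nlinarith
  -- choose y = (‖x‖ / ‖S x‖) • S x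
  have hSx : (0:ℝ) < ‖S x‖ := norm_pos_iff.mpr h0
  have := polar ((((‖x‖ / ‖S x‖ : ℝ)) : ℂ) • S x)
  have hin : (⟪S x, (((‖x‖ / ‖S x‖ : ℝ)) : ℂ) • S x⟫_ℂ).re
      = (‖x‖ / ‖S x‖) * ‖S x‖ ^ 2 := by
    rw [inner_smul_right]
    rw [← inner_self_eq_norm_sq (𝕜 := ℂ)]
    simp [Complex.mul_re]
  have hny : ‖(((‖x‖ / ‖S x‖ : ℝ)) : ℂ) • S x‖ = ‖x‖ := by
    rw [norm_smul, Complex.norm_real, Real.norm_of_nonneg (by positivity)]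
    field_simp
  rw [hin, hny] at this
  have hxSx : (‖x‖ / ‖S x‖) * ‖S x‖ ^ 2 = ‖x‖ * ‖S x‖ := by
    field_simp
  rw [hxSx] at this
  have hx0 : x ≠ 0 := fun h => h0 (by simp [h])
  have hxp : (0:ℝ) < ‖x‖ := norm_pos_iff.mpr hx0
  nlinarith

end MyAux

section Part2
variable (A : H →L[ℂ] H)

lemma reOp_sa : IsSelfAdjoint (reOp A) := by
  rw [IsSelfAdjoint, reOp, star_smul, star_add, star_eq_adjoint, star_eq_adjoint,
    adjoint_adjoint]
  have : star ((2:ℂ)⁻¹) = (2:ℂ)⁻¹ := by simp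
  rw [this, add_comm]

lemma imOp_sa : IsSelfAdjoint (imOp A) := by
  rw [IsSelfAdjoint, imOp, star_smul, star_sub, star_eq_adjoint, star_eq_adjoint,
    adjoint_adjoint]
  have h : star ((2 * Complex.I)⁻¹) = -(2 * Complex.I)⁻¹ := by
    have e : (2 * Complex.I)⁻¹ = -(2:ℂ)⁻¹ * Complex.I := by
      rw [mul_inv, Complex.inv_I]; ring
    rw [e, Complex.star_def]
    simp [Complex.ext_iff]
  rw [h, neg_smul, ← smul_neg, neg_sub]

lemma decomp : reOp A + Complex.I • imOp A = A := by
  rw [reOp, imOp, smul_smul]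
  have h : Complex.I * (2 * Complex.I)⁻¹ = (2:ℂ)⁻¹ := by
    rw [mul_inv]
    rw [mul_comm ((2:ℂ)⁻¹) _, ← mul_assoc, mul_inv_cancel₀ Complex.I_ne_zero, one_mul]
  rw [h, ← smul_add]
  have h2 : (A + adjoint A) + (A - adjoint A) = (2:ℂ) • A := by module
  rw [h2, smul_smul]
  norm_num

lemma norm_sq_inner_pair {P Q : H →L[ℂ] H} (hP : IsSelfAdjoint P) (hQ : IsSelfAdjoint Q)
    (x : H) :
    ‖⟪(P + Complex.I • Q) x, x⟫_ℂ‖ ^ 2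
      = (⟪P x, x⟫_ℂ).re ^ 2 + (⟪Q x, x⟫_ℂ).re ^ 2 := by
  have hd : ⟪(P + Complex.I • Q) x, x⟫_ℂ
      = ((⟪P x, x⟫_ℂ).re : ℂ) - Complex.I * ((⟪Q x, x⟫_ℂ).re : ℂ) := by
    rw [ContinuousLinearMap.add_apply, inner_add_left, ContinuousLinearMap.smul_apply,
      inner_smul_left, Complex.conj_I, ← MyAux.inner_real hP x, ← MyAux.inner_real hQ x]
    ring
  rw [hd, Complex.sq_norm, Complex.normSq_apply]
  simp only [Complex.sub_re, Complex.sub_im, Complex.mul_re, Complex.mul_im,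
    Complex.ofReal_re, Complex.ofReal_im, Complex.I_re, Complex.I_im]
  ring

lemma norm_sq_inner (x : H) :
    ‖⟪A x, x⟫_ℂ‖ ^ 2 = (⟪reOp A x, x⟫_ℂ).re ^ 2 + (⟪imOp A x, x⟫_ℂ).re ^ 2 := by
  have := norm_sq_inner_pair (reOp_sa A) (imOp_sa A) x
  rwa [decomp A] at this

lemma op_identity :
    adjoint A * A + A * adjoint A
      = (reOp A + imOp A) * (reOp A + imOp A)
        + (reOp A - imOp A) * (reOp A - imOp A) := by
  have hc : (2 * Complex.I)⁻¹ * (2 * Complex.I)⁻¹ = -(4:ℂ)⁻¹ := by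
    rw [← mul_inv]
    rw [show (2 * Complex.I) * (2 * Complex.I) = (-4 : ℂ) by
      linear_combination (4:ℂ) * Complex.I_sq]
    norm_num
  have hPP : reOp A * reOp A = (4:ℂ)⁻¹ • ((A + adjoint A) * (A + adjoint A)) := by
    rw [reOp, smul_mul_smul_comm]
    norm_num
  have hQQ : imOp A * imOp A = (-(4:ℂ)⁻¹) • ((A - adjoint A) * (A - adjoint A)) := by
    rw [imOp, smul_mul_smul_comm, hc]
  have key : (reOp A + imOp A) * (reOp A + imOp A)
        + (reOp A - imOp A) * (reOp A - imOp A)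
      = (reOp A * reOp A + imOp A * imOp A)
        + (reOp A * reOp A + imOp A * imOp A) := by noncomm_ring
  rw [key, hPP, hQQ]
  have e1 : (A + adjoint A) * (A + adjoint A)
      = A*A + A*adjoint A + adjoint A*A + adjoint A*adjoint A := by noncomm_ring
  have e2 : (A - adjoint A) * (A - adjoint A)
      = A*A - A*adjoint A - adjoint A*A + adjoint A*adjoint A := by noncomm_ring
  rw [e1, e2]
  module

end Part2

section Part3
variable {P : H →L[ℂ] H}

lemma opAbs_eq_cfc (hP : IsSelfAdjoint P) :
    opAbs P = cfc (fun t : ℝ => |t|) P := by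
  rw [opAbs, ← star_eq_adjoint, hP.star_eq]
  refine CFC.sqrt_unique ?_ (cfc_nonneg (fun t _ => abs_nonneg t))
  rw [← cfc_mul _ _ P]
  calc cfc (fun t : ℝ => |t| * |t|) P = cfc (fun t : ℝ => t * t) P :=
        cfc_congr (fun t _ => abs_mul_abs_self t)
  _ = P * P := by rw [cfc_mul _ _ P, cfc_id' ℝ P]

set_option synthInstance.maxHeartbeats 1000000 in
lemma opAbs_sa (P : H →L[ℂ] H) : IsSelfAdjoint (opAbs P) := by
  have h : (0 : H →L[ℂ] H) ≤ opAbs P := CFC.sqrt_nonneg (adjoint P * P)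
  exact ((ContinuousLinearMap.nonneg_iff_isPositive _).mp h).isSelfAdjoint

lemma abs_sub_nonneg (hP : IsSelfAdjoint P) : (0 : H →L[ℂ] H) ≤ opAbs P - P := by
  rw [opAbs_eq_cfc hP]
  have h : cfc (fun t : ℝ => |t| - t) P = cfc (fun t : ℝ => |t|) P - P := by
    rw [cfc_sub _ _ P, cfc_id' ℝ P]
  rw [← h]
  exact cfc_nonneg fun t _ => sub_nonneg.mpr (le_abs_self t)

lemma abs_add_nonneg (hP : IsSelfAdjoint P) : (0 : H →L[ℂ] H) ≤ opAbs P + P := by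
  rw [opAbs_eq_cfc hP]
  have h : cfc (fun t : ℝ => |t| + t) P = cfc (fun t : ℝ => |t|) P + P := by
    rw [cfc_add (a := P) _ _, cfc_id' ℝ P]
  rw [← h]
  exact cfc_nonneg fun t _ => by linarith [neg_abs_le t]

lemma abs_inner_re_le (hP : IsSelfAdjoint P) (x : H) :
    |(⟪P x, x⟫_ℂ).re| ≤ (⟪opAbs P x, x⟫_ℂ).re := by
  have h1 := ((ContinuousLinearMap.nonneg_iff_isPositive _).mp
    (abs_sub_nonneg hP)).inner_nonneg_left x
  have h2 := ((ContinuousLinearMap.nonneg_iff_isPositive _).mp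
    (abs_add_nonneg hP)).inner_nonneg_left x
  simp only [ContinuousLinearMap.sub_apply, ContinuousLinearMap.add_apply, inner_sub_left,
    inner_add_left, map_sub, map_add, RCLike.re_to_complex] at h1 h2
  have h1' := (Complex.le_def.mp h1).1
  have h2' := (Complex.le_def.mp h2).1
  simp only [Complex.zero_re, Complex.sub_re, Complex.add_re] at h1' h2'
  rw [abs_le]
  constructor <;> linarith

end Part3

theorem stmt5 (A : H →L[ℂ] H) :
    (1/4) * ‖adjoint A * A + A * adjoint A‖
      + (1/2) * max ‖reOp A‖ ‖imOp A‖ * |‖reOp A + imOp A‖ - ‖reOp A - imOp A‖|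
      ≤ (numRad A) ^ 2 ∧
    (numRad A) ^ 2 ≤ (numRad (opAbs (reOp A) + Complex.I • opAbs (imOp A))) ^ 2 := by
  have hP : IsSelfAdjoint (reOp A) := reOp_sa A
  have hQ : IsSelfAdjoint (imOp A) := imOp_sa A
  have hw0 : 0 ≤ numRad A := MyAux.numRad_nonneg A
  constructor
  · set P := reOp A with hPdef
    set Q := imOp A with hQdef
    set w := numRad A with hwdef
    have key : ∀ S : H →L[ℂ] H, IsSelfAdjoint S →
        (∀ x : H, ‖x‖ = 1 → ‖⟪S x, x⟫_ℂ‖ ^ 2 ≤ 2 * w ^ 2) → ‖S‖ ^ 2 ≤ 2 * w ^ 2 := by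
      intro S hS hpt
      have h1 : numRad S ≤ Real.sqrt (2 * w ^ 2) := by
        apply MyAux.numRad_le
        intro x hx
        exact (Real.le_sqrt (norm_nonneg _) (by positivity)).mpr (hpt x hx)
      have h2 : ‖S‖ ≤ Real.sqrt (2 * w ^ 2) := (MyAux.selfadjoint_norm_le hS).trans h1
      calc ‖S‖ ^ 2 ≤ Real.sqrt (2 * w ^ 2) ^ 2 := pow_le_pow_left₀ (norm_nonneg S) h2 2
      _ = 2 * w ^ 2 := Real.sq_sqrt (by positivity)
    have ha2 : ‖P + Q‖ ^ 2 ≤ 2 * w ^ 2 := by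
      refine key _ (hP.add hQ) ?_
      intro x hx
      have hre : (⟪(P + Q) x, x⟫_ℂ).re = (⟪P x, x⟫_ℂ).re + (⟪Q x, x⟫_ℂ).re := by
        simp [ContinuousLinearMap.add_apply, inner_add_left]
      have hnorm : ‖⟪(P + Q) x, x⟫_ℂ‖ = |(⟪(P + Q) x, x⟫_ℂ).re| := by
        conv_lhs => rw [MyAux.inner_real (hP.add hQ) x]
        rw [Complex.norm_real, Real.norm_eq_abs]
      rw [hnorm, sq_abs, hre]
      have hx2 := norm_sq_inner A x
      rw [← hPdef, ← hQdef] at hx2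
      have hAx := MyAux.le_numRad A hx
      rw [← hwdef] at hAx
      nlinarith [norm_nonneg (⟪A x, x⟫_ℂ), pow_le_pow_left₀ (norm_nonneg (⟪A x, x⟫_ℂ)) hAx 2,
        sq_nonneg ((⟪P x, x⟫_ℂ).re - (⟪Q x, x⟫_ℂ).re)]
    have hb2 : ‖P - Q‖ ^ 2 ≤ 2 * w ^ 2 := by
      refine key _ (hP.sub hQ) ?_
      intro x hx
      have hre : (⟪(P - Q) x, x⟫_ℂ).re = (⟪P x, x⟫_ℂ).re - (⟪Q x, x⟫_ℂ).re := by
        simp [ContinuousLinearMap.sub_apply, inner_sub_left]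
      have hnorm : ‖⟪(P - Q) x, x⟫_ℂ‖ = |(⟪(P - Q) x, x⟫_ℂ).re| := by
        conv_lhs => rw [MyAux.inner_real (hP.sub hQ) x]
        rw [Complex.norm_real, Real.norm_eq_abs]
      rw [hnorm, sq_abs, hre]
      have hx2 := norm_sq_inner A x
      rw [← hPdef, ← hQdef] at hx2
      have hAx := MyAux.le_numRad A hx
      rw [← hwdef] at hAx
      nlinarith [norm_nonneg (⟪A x, x⟫_ℂ), pow_le_pow_left₀ (norm_nonneg (⟪A x, x⟫_ℂ)) hAx 2,
        sq_nonneg ((⟪P x, x⟫_ℂ).re + (⟪Q x, x⟫_ℂ).re)]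
    have hmP : 2 * ‖P‖ ≤ ‖P + Q‖ + ‖P - Q‖ := by
      have h : (2:ℂ) • P = (P + Q) + (P - Q) := by module
      have h2 : ‖(2:ℂ) • P‖ = 2 * ‖P‖ := by rw [norm_smul]; simp
      rw [← h2, h]; exact norm_add_le _ _
    have hmQ : 2 * ‖Q‖ ≤ ‖P + Q‖ + ‖P - Q‖ := by
      have h : (2:ℂ) • Q = (P + Q) - (P - Q) := by module
      have h2 : ‖(2:ℂ) • Q‖ = 2 * ‖Q‖ := by rw [norm_smul]; simp
      rw [← h2, h]; exact norm_sub_le _ _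
    have hid : ‖adjoint A * A + A * adjoint A‖ ≤ ‖P + Q‖ ^ 2 + ‖P - Q‖ ^ 2 := by
      rw [op_identity A]
      refine (norm_add_le _ _).trans (add_le_add ?_ ?_) <;>
        exact (norm_mul_le _ _).trans_eq (sq _).symm
    have ha0 : (0:ℝ) ≤ ‖P + Q‖ := norm_nonneg _
    have hb0 : (0:ℝ) ≤ ‖P - Q‖ := norm_nonneg _
    have hmax : max ‖P‖ ‖Q‖ ≤ (‖P + Q‖ + ‖P - Q‖) / 2 :=
      max_le (by linarith) (by linarith)
    have hmax0 : (0:ℝ) ≤ max ‖P‖ ‖Q‖ := le_max_of_le_left (norm_nonneg _)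
    rcases abs_cases (‖P + Q‖ - ‖P - Q‖) with ⟨he, hc⟩ | ⟨he, hc⟩ <;> rw [he] <;>
      nlinarith [mul_le_mul_of_nonneg_right hmax (by linarith : (0:ℝ) ≤ |‖P + Q‖ - ‖P - Q‖|),
        abs_cases (‖P + Q‖ - ‖P - Q‖)]
  · have key : numRad A ≤ numRad (opAbs (reOp A) + Complex.I • opAbs (imOp A)) := by
      apply MyAux.numRad_mono
      intro x hx
      have h1 := norm_sq_inner A x
      have h2 := norm_sq_inner_pair (opAbs_sa (reOp A)) (opAbs_sa (imOp A)) x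
      have h3 := abs_inner_re_le hP x
      have h4 := abs_inner_re_le hQ x
      have hsq : ‖⟪A x, x⟫_ℂ‖ ^ 2
          ≤ ‖⟪(opAbs (reOp A) + Complex.I • opAbs (imOp A)) x, x⟫_ℂ‖ ^ 2 := by
        rw [h1, h2]
        nlinarith [mul_self_le_mul_self (abs_nonneg ((⟪reOp A x, x⟫_ℂ).re)) h3,
          mul_self_le_mul_self (abs_nonneg ((⟪imOp A x, x⟫_ℂ).re)) h4,
          sq_abs ((⟪reOp A x, x⟫_ℂ).re), sq_abs ((⟪imOp A x, x⟫_ℂ).re)]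
      exact (pow_le_pow_iff_left₀ (norm_nonneg _) (norm_nonneg _) two_ne_zero).mp hsq
    exact pow_le_pow_left₀ hw0 key 2
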